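/- There exists a universal constant C such that for any finite probability space (Ω, μ) with minimal atom probability μ* and any f ∈ L²(Ω^n, μ^n), Var(f) ≤ C·log(1/μ*)·Σ_{i=1}^n ||Δ_i f||₂² / log(||Δ_i f||₂ / ||Δ_i f||₁), where Δ_i f = Σ_{S : i ∈ S} f_S is from the Efron-Stein decomposition (assuming each Δ_i f is nonzero and ||Δ_i f||₂ > ||Δ_i f||₁). -/

import Mathlib

open Finset

/-- Conditional expectation of `g` given the coordinates in `S`, for the product measure
`μ^{⊗n}` on `Ω^n` (the discrete measure `μ` given by weights `w` summing to `1`). -/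
noncomputable def condExp {n : ℕ} {Ω : Type*} [Fintype Ω]
    (w : Ω → ℝ) (S : Finset (Fin n)) (g : (Fin n → Ω) → ℝ) (x : Fin n → Ω) : ℝ :=
  ∑ y : Fin n → Ω, (∏ i, w (y i)) * g (fun i => if i ∈ S then x i else y i)

namespace Tala

variable {n : ℕ} {Ω : Type} [Fintype Ω]
set_option linter.unusedSectionVars false

def Wt (w : Ω → ℝ) (x : Fin n → Ω) : ℝ := ∏ i, w (x i)

def mrg (S : Finset (Fin n)) (x y : Fin n → Ω) : Fin n → Ω :=
  fun i => if i ∈ S then x i else y i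

lemma condExp_eq (w : Ω → ℝ) (S : Finset (Fin n)) (g : (Fin n → Ω) → ℝ) (x : Fin n → Ω) :
    condExp w S g x = ∑ y, Wt w y * g (mrg S x y) := rfl

lemma Wt_nonneg {w : Ω → ℝ} (hw : ∀ a, 0 < w a) (x : Fin n → Ω) : 0 ≤ Wt w x :=
  Finset.prod_nonneg fun i _ => (hw (x i)).le

lemma sum_Wt {w : Ω → ℝ} (hw1 : ∑ a, w a = 1) : ∑ x : Fin n → Ω, Wt w x = 1 := by
  classical
  have h := Finset.prod_univ_sum (fun _ : Fin n => (univ : Finset Ω)) (fun _ a => w a)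
  rw [Fintype.piFinset_univ] at h
  unfold Wt
  rw [← h]
  simp [hw1]

lemma mrg_mrg (S : Finset (Fin n)) (x y : Fin n → Ω) :
    mrg S (mrg S x y) (mrg S y x) = x := by
  funext i; by_cases h : i ∈ S <;> simp [mrg, h]

lemma Wt_mrg_mul (w : Ω → ℝ) (S : Finset (Fin n)) (x y : Fin n → Ω) :
    Wt w (mrg S x y) * Wt w (mrg S y x) = Wt w x * Wt w y := by
  unfold Wt mrg
  rw [← Finset.prod_mul_distrib, ← Finset.prod_mul_distrib]
  refine Finset.prod_congr rfl fun i _ => ?_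
  by_cases h : i ∈ S <;> simp [h, mul_comm]

lemma sum_pair (w : Ω → ℝ) (S : Finset (Fin n)) (F : (Fin n → Ω) → (Fin n → Ω) → ℝ) :
    ∑ x : Fin n → Ω, ∑ y : Fin n → Ω, Wt w x * Wt w y * F (mrg S x y) (mrg S y x)
      = ∑ x : Fin n → Ω, ∑ y : Fin n → Ω, Wt w x * Wt w y * F x y := by
  classical
  have e : Function.Involutive
      (fun p : (Fin n → Ω) × (Fin n → Ω) => (mrg S p.1 p.2, mrg S p.2 p.1)) := by
    intro p
    ext1
    · exact mrg_mrg S p.1 p.2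
    · exact mrg_mrg S p.2 p.1
  calc ∑ x : Fin n → Ω, ∑ y : Fin n → Ω, Wt w x * Wt w y * F (mrg S x y) (mrg S y x)
      = ∑ p : (Fin n → Ω) × (Fin n → Ω), Wt w p.1 * Wt w p.2 * F (mrg S p.1 p.2) (mrg S p.2 p.1) :=
        (Fintype.sum_prod_type' _).symm
    _ = ∑ p : (Fin n → Ω) × (Fin n → Ω), Wt w p.1 * Wt w p.2 * F p.1 p.2 := by
        refine Fintype.sum_bijective _ e.bijective _ _ fun p => ?_
        dsimp only
        rw [Wt_mrg_mul]
    _ = _ := Fintype.sum_prod_type' (fun x y => Wt w x * Wt w y * F x y)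


variable {w : Ω → ℝ}

lemma condExp_condExp (hw1 : ∑ a, w a = 1) (S T : Finset (Fin n)) (g : (Fin n → Ω) → ℝ) :
    condExp w S (condExp w T g) = condExp w (S ∩ T) g := by
  funext x
  have key : ∀ y z : Fin n → Ω,
      mrg T (mrg S x y) z = mrg T (mrg (S ∩ T) x (mrg T y z)) (mrg T z (mrg T y z)) := by
    intro y z; funext i
    by_cases hT : i ∈ T <;> by_cases hS : i ∈ S <;> simp [mrg, hT, hS]
  have step1 : condExp w S (condExp w T g) x
      = ∑ y, ∑ z, Wt w y * Wt w z * g (mrg T (mrg S x y) z) := by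
    rw [condExp_eq]
    refine Finset.sum_congr rfl fun y _ => ?_
    rw [condExp_eq, Finset.mul_sum]
    refine Finset.sum_congr rfl fun z _ => ?_
    ring
  have step2 : ∀ y z : Fin n → Ω, g (mrg T (mrg S x y) z) = g (mrg (S ∩ T) x (mrg T y z)) := by
    intro y z; congr 1; funext i
    by_cases hT : i ∈ T <;> by_cases hS : i ∈ S <;> simp [mrg, hT, hS]
  rw [step1]
  simp only [step2]
  have := sum_pair w T (fun u _ => g (mrg (S ∩ T) x u))
  rw [this, condExp_eq]
  refine Finset.sum_congr rfl fun y _ => ?_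
  have hz : ∑ z : Fin n → Ω, Wt w y * Wt w z * g (mrg (S ∩ T) x y)
      = (∑ z : Fin n → Ω, Wt w z) * (Wt w y * g (mrg (S ∩ T) x y)) := by
    rw [Finset.sum_mul]
    exact Finset.sum_congr rfl fun z _ => by ring
  rw [hz, sum_Wt hw1, one_mul]

lemma condExp_adjoint (S : Finset (Fin n)) (g h : (Fin n → Ω) → ℝ) :
    ∑ x, Wt w x * (condExp w S g x * h x) = ∑ x, Wt w x * (g x * condExp w S h x) := by
  have l : ∑ x, Wt w x * (condExp w S g x * h x)
      = ∑ x, ∑ y, Wt w x * Wt w y * (g (mrg S x y) * h (mrg S (mrg S x y) (mrg S y x))) := by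
    refine Finset.sum_congr rfl fun x _ => ?_
    rw [condExp_eq, Finset.sum_mul, Finset.mul_sum]
    refine Finset.sum_congr rfl fun y _ => ?_
    rw [mrg_mrg]; ring
  have r : ∑ x, Wt w x * (g x * condExp w S h x)
      = ∑ x, ∑ y, Wt w x * Wt w y * (g x * h (mrg S x y)) := by
    refine Finset.sum_congr rfl fun x _ => ?_
    rw [condExp_eq, Finset.mul_sum, Finset.mul_sum]
    refine Finset.sum_congr rfl fun y _ => ?_
    ring
  rw [l, r, sum_pair w S (fun u v => g u * h (mrg S u v))]

lemma condExp_univ (hw1 : ∑ a, w a = 1) (g : (Fin n → Ω) → ℝ) :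
    condExp w univ g = g := by
  funext x
  rw [condExp_eq]
  have : ∀ y : Fin n → Ω, mrg univ x y = x := by
    intro y; funext i; simp [mrg]
  simp only [this]
  rw [← Finset.sum_mul, sum_Wt hw1, one_mul]

def DOn (A : Finset (Fin n)) (g : (Fin n → Ω) → ℝ) : Prop :=
  ∀ x y, (∀ i ∈ A, x i = y i) → g x = g y

lemma DOn.mono {A B : Finset (Fin n)} {g : (Fin n → Ω) → ℝ} (hAB : A ⊆ B) (hg : DOn A g) :
    DOn B g := fun x y hxy => hg x y fun i hi => hxy i (hAB hi)

lemma dOn_condExp (S : Finset (Fin n)) (g : (Fin n → Ω) → ℝ) : DOn S (condExp w S g) := by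
  intro x y hxy
  rw [condExp_eq, condExp_eq]
  refine Finset.sum_congr rfl fun z _ => ?_
  have : mrg S x z = mrg S y z := by
    funext i
    by_cases h : i ∈ S
    · simp [mrg, h, hxy i h]
    · simp [mrg, h]
  rw [this]

lemma condExp_of_dOn (hw1 : ∑ a, w a = 1) {A : Finset (Fin n)} {g : (Fin n → Ω) → ℝ}
    (hg : DOn A g) : condExp w A g = g := by
  funext x
  rw [condExp_eq]
  have : ∀ y : Fin n → Ω, g (mrg A x y) = g x := by
    intro y
    exact hg _ _ (fun i hi => by simp [mrg, hi])
  simp only [this]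
  rw [← Finset.sum_mul, sum_Wt hw1, one_mul]

lemma condExp_sub (S : Finset (Fin n)) (g h : (Fin n → Ω) → ℝ) :
    condExp w S (fun x => g x - h x) = fun x => condExp w S g x - condExp w S h x := by
  funext x
  simp only [condExp_eq, ← Finset.sum_sub_distrib]
  exact Finset.sum_congr rfl fun y _ => by ring

lemma condExp_zero (S : Finset (Fin n)) : condExp w S (fun _ => (0:ℝ)) = fun _ => (0:ℝ) := by
  funext x; simp [condExp_eq]

lemma condExp_finsum {ι : Type*} (S : Finset (Fin n)) (P : Finset ι)
    (g : ι → (Fin n → Ω) → ℝ) :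
    condExp w S (fun x => ∑ t ∈ P, g t x) = fun x => ∑ t ∈ P, condExp w S (g t) x := by
  funext x
  simp only [condExp_eq, Finset.mul_sum]
  exact Finset.sum_comm


noncomputable def esp (w : Ω → ℝ) (S : Finset (Fin n)) (f : (Fin n → Ω) → ℝ) :
    (Fin n → Ω) → ℝ :=
  fun x => ∑ T ∈ S.powerset, (-1 : ℝ) ^ (S.card + T.card) * condExp w T f x

lemma mobius (A : Finset (Fin n)) : ∀ G : Finset (Fin n) → ℝ,
    ∑ S ∈ A.powerset, ∑ T ∈ S.powerset, (-1:ℝ) ^ (S.card + T.card) * G T = G A := by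
  classical
  induction A using Finset.induction_on with
  | empty => intro G; simp
  | insert _ _ ha ih =>
    rename_i a A
    intro G
    rw [Finset.sum_powerset_insert ha]
    have h1 : ∀ S ∈ A.powerset,
        ∑ T ∈ (insert a S).powerset, (-1:ℝ) ^ ((insert a S).card + T.card) * G T
        = -(∑ T ∈ S.powerset, (-1:ℝ) ^ (S.card + T.card) * G T)
          + ∑ T ∈ S.powerset, (-1:ℝ) ^ (S.card + T.card) * G (insert a T) := by
      intro S hS
      have haS : a ∉ S := fun h => ha (Finset.mem_powerset.mp hS h)
      rw [Finset.sum_powerset_insert haS, Finset.card_insert_of_notMem haS]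
      congr 1
      · rw [← Finset.sum_neg_distrib]
        refine Finset.sum_congr rfl fun T _ => ?_
        have he : S.card + 1 + T.card = (S.card + T.card) + 1 := by omega
        rw [he, pow_succ]
        ring
      · refine Finset.sum_congr rfl fun T hT => ?_
        have haT : a ∉ T := fun h => haS (Finset.mem_powerset.mp hT h)
        rw [Finset.card_insert_of_notMem haT]
        have he : S.card + 1 + (T.card + 1) = (S.card + T.card) + 2 := by omega
        rw [he, pow_add]
        norm_num
    rw [Finset.sum_congr rfl h1, Finset.sum_add_distrib, Finset.sum_neg_distrib]
    rw [ih G, ih (fun T => G (insert a T))]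
    ring


lemma sum_esp (A : Finset (Fin n)) (f : (Fin n → Ω) → ℝ) (x : Fin n → Ω) :
    ∑ S ∈ A.powerset, esp w S f x = condExp w A f x := by
  unfold esp
  exact mobius A (fun T => condExp w T f x)

lemma esp_decomp (hw1 : ∑ a, w a = 1) (f : (Fin n → Ω) → ℝ) (x : Fin n → Ω) :
    ∑ S : Finset (Fin n), esp w S f x = f x := by
  have := sum_esp (w := w) (univ : Finset (Fin n)) f x
  rw [Finset.powerset_univ] at this
  rw [this, condExp_univ hw1]

lemma dOn_esp (S : Finset (Fin n)) (f : (Fin n → Ω) → ℝ) : DOn S (esp w S f) := by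
  intro x y hxy
  unfold esp
  refine Finset.sum_congr rfl fun T hT => ?_
  have : condExp w T f x = condExp w T f y :=
    (dOn_condExp T f).mono (Finset.mem_powerset.mp hT) x y hxy
  rw [this]

lemma sum_powerset_erase_zero {S : Finset (Fin n)} {i : Fin n} (hi : i ∈ S)
    (G : Finset (Fin n) → ℝ) :
    ∑ T ∈ S.powerset, (-1:ℝ) ^ (S.card + T.card) * G (T.erase i) = 0 := by
  classical
  have hS : insert i (S.erase i) = S := Finset.insert_erase hi
  have hi' : i ∉ S.erase i := Finset.notMem_erase i S
  rw [← hS, Finset.sum_powerset_insert hi']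
  rw [Finset.card_insert_of_notMem hi']
  rw [← Finset.sum_add_distrib]
  rw [show (0:ℝ) = ∑ T ∈ (S.erase i).powerset, (0:ℝ) from (Finset.sum_const_zero).symm]
  refine Finset.sum_congr rfl fun T hT => ?_
  have hiT : i ∉ T := fun h => hi' (Finset.mem_powerset.mp hT h)
  rw [Finset.erase_insert hiT, Finset.erase_eq_of_notMem hiT,
    Finset.card_insert_of_notMem hiT]
  have he : (S.erase i).card + 1 + (T.card + 1) = ((S.erase i).card + 1 + T.card) + 1 := by omega
  rw [he, pow_succ]
  ring

lemma inter_compl_erase (T : Finset (Fin n)) (i : Fin n) :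
    ({i} : Finset (Fin n))ᶜ ∩ T = T.erase i := by
  ext j
  simp [Finset.mem_erase, and_comm]

lemma condExp_compl_esp (hw1 : ∑ a, w a = 1) (S : Finset (Fin n)) (i : Fin n)
    (f : (Fin n → Ω) → ℝ) :
    condExp w (({i} : Finset (Fin n))ᶜ) (esp w S f)
      = if i ∈ S then (fun _ => 0) else esp w S f := by
  have expand : condExp w (({i} : Finset (Fin n))ᶜ) (esp w S f)
      = fun x => ∑ T ∈ S.powerset, (-1:ℝ) ^ (S.card + T.card) * condExp w (T.erase i) f x := by
    unfold esp
    rw [condExp_finsum]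
    funext x
    refine Finset.sum_congr rfl fun T _ => ?_
    have : condExp w (({i} : Finset (Fin n))ᶜ) (fun y => (-1:ℝ) ^ (S.card + T.card) * condExp w T f y)
        = fun y => (-1:ℝ) ^ (S.card + T.card) * condExp w (({i} : Finset (Fin n))ᶜ ∩ T) f y := by
      rw [← condExp_condExp hw1]
      funext y
      rw [condExp_eq, condExp_eq, Finset.mul_sum]
      exact Finset.sum_congr rfl fun z _ => by ring
    rw [this, inter_compl_erase]
  by_cases hi : i ∈ S
  · rw [expand, if_pos hi]
    funext x
    exact sum_powerset_erase_zero hi (fun T => condExp w T f x)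
  · rw [expand, if_neg hi]
    funext x
    unfold esp
    refine Finset.sum_congr rfl fun T hT => ?_
    have hiT : i ∉ T := fun h => hi (Finset.mem_powerset.mp hT h)
    rw [Finset.erase_eq_of_notMem hiT]

lemma esp_condExp_compl (hw1 : ∑ a, w a = 1) (S : Finset (Fin n)) (i : Fin n)
    (f : (Fin n → Ω) → ℝ) :
    esp w S (condExp w (({i} : Finset (Fin n))ᶜ) f)
      = if i ∈ S then (fun _ => 0) else esp w S f := by
  have expand : esp w S (condExp w (({i} : Finset (Fin n))ᶜ) f)
      = fun x => ∑ T ∈ S.powerset, (-1:ℝ) ^ (S.card + T.card) * condExp w (T.erase i) f x := by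
    unfold esp
    funext x
    refine Finset.sum_congr rfl fun T _ => ?_
    have h2 : condExp w T (condExp w (({i} : Finset (Fin n))ᶜ) f)
        = condExp w (T.erase i) f := by
      rw [condExp_condExp hw1]
      congr 1
      rw [Finset.inter_comm, inter_compl_erase]
    rw [h2]
  by_cases hi : i ∈ S
  · rw [expand, if_pos hi]
    funext x
    exact sum_powerset_erase_zero hi (fun T => condExp w T f x)
  · rw [expand, if_neg hi]
    funext x
    unfold esp
    refine Finset.sum_congr rfl fun T hT => ?_
    have hiT : i ∉ T := fun h => hi (Finset.mem_powerset.mp hT h)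
    rw [Finset.erase_eq_of_notMem hiT]

lemma esp_eq_zero_of_not_subset (hw1 : ∑ a, w a = 1) {A T : Finset (Fin n)}
    {f : (Fin n → Ω) → ℝ} (hf : DOn A f) (hT : ¬ T ⊆ A) : esp w T f = 0 := by
  obtain ⟨i, hiT, hiA⟩ := Finset.not_subset.mp hT
  have hsub : A ⊆ ({i} : Finset (Fin n))ᶜ := by
    intro j hj
    simp only [Finset.mem_compl, Finset.mem_singleton]
    rintro rfl; exact hiA hj
  have : condExp w (({i} : Finset (Fin n))ᶜ) f = f := condExp_of_dOn hw1 (hf.mono hsub)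
  rw [← this, esp_condExp_compl hw1, if_pos hiT]
  rfl

lemma esp_zero (S : Finset (Fin n)) : esp w S (fun _ => (0:ℝ)) = 0 := by
  funext x
  simp only [Pi.zero_apply]
  unfold esp
  refine Finset.sum_eq_zero fun T _ => ?_
  rw [condExp_zero]
  simp

lemma esp_esp (hw1 : ∑ a, w a = 1) {S T : Finset (Fin n)} (hST : T ≠ S)
    (f : (Fin n → Ω) → ℝ) : esp w T (esp w S f) = 0 := by
  classical
  by_cases hTS : T ⊆ S
  · -- then S ⊄ T : pick i ∈ S \ T
    have hST' : ¬ S ⊆ T := fun h => hST (Finset.Subset.antisymm hTS h)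
    obtain ⟨i, hiS, hiT⟩ := Finset.not_subset.mp hST'
    have hE : condExp w (({i} : Finset (Fin n))ᶜ) (esp w S f) = fun _ => 0 := by
      rw [condExp_compl_esp hw1, if_pos hiS]
    funext x
    simp only [Pi.zero_apply]
    have hrfl : esp w T (esp w S f) x
        = ∑ A ∈ T.powerset, (-1:ℝ) ^ (T.card + A.card) * condExp w A (esp w S f) x := rfl
    rw [hrfl]
    refine Finset.sum_eq_zero fun A hA => ?_
    have hiA : i ∉ A := fun h => hiT (Finset.mem_powerset.mp hA h)
    have hAi : A ∩ (({i} : Finset (Fin n))ᶜ) = A := by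
      ext j
      simp only [Finset.mem_inter, Finset.mem_compl, Finset.mem_singleton]
      exact ⟨fun hj => hj.1, fun hj => ⟨hj, fun hji => hiA (hji ▸ hj)⟩⟩
    have h1 : condExp w A (esp w S f)
        = condExp w A (condExp w (({i} : Finset (Fin n))ᶜ) (esp w S f)) := by
      rw [condExp_condExp hw1, hAi]
    rw [h1, hE, condExp_zero]
    simp
  · exact esp_eq_zero_of_not_subset hw1 (dOn_esp S f) hTS


noncomputable def inn (w : Ω → ℝ) (g h : (Fin n → Ω) → ℝ) : ℝ :=
  ∑ x, Wt w x * (g x * h x)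

lemma inn_comm (g h : (Fin n → Ω) → ℝ) : inn w g h = inn w h g := by
  unfold inn
  exact Finset.sum_congr rfl fun x _ => by ring

lemma inn_self_nonneg (hw : ∀ a, 0 < w a) (g : (Fin n → Ω) → ℝ) : 0 ≤ inn w g g :=
  Finset.sum_nonneg fun x _ => mul_nonneg (Wt_nonneg hw x) (mul_self_nonneg _)

lemma inn_sum_left {ι : Type*} (P : Finset ι) (g : ι → (Fin n → Ω) → ℝ)
    (h : (Fin n → Ω) → ℝ) :
    inn w (fun x => ∑ t ∈ P, g t x) h = ∑ t ∈ P, inn w (g t) h := by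
  unfold inn
  rw [Finset.sum_comm]
  refine Finset.sum_congr rfl fun x _ => ?_
  rw [Finset.sum_mul, Finset.mul_sum]

lemma inn_sum_right {ι : Type*} (P : Finset ι) (g : (Fin n → Ω) → ℝ)
    (h : ι → (Fin n → Ω) → ℝ) :
    inn w g (fun x => ∑ t ∈ P, h t x) = ∑ t ∈ P, inn w g (h t) := by
  rw [inn_comm, inn_sum_left]
  exact Finset.sum_congr rfl fun t _ => inn_comm _ _

lemma inn_zero_right (g : (Fin n → Ω) → ℝ) : inn w g (fun _ => (0:ℝ)) = 0 := by
  unfold inn; simp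

lemma inn_esp_left (hw1 : ∑ a, w a = 1) (S : Finset (Fin n)) (f h : (Fin n → Ω) → ℝ) :
    inn w (esp w S f) h = inn w f (esp w S h) := by
  unfold inn
  have l : ∀ x, Wt w x * (esp w S f x * h x)
      = ∑ T ∈ S.powerset, (-1:ℝ) ^ (S.card + T.card) * (Wt w x * (condExp w T f x * h x)) := by
    intro x
    have : esp w S f x = ∑ T ∈ S.powerset, (-1:ℝ) ^ (S.card + T.card) * condExp w T f x := rfl
    rw [this, Finset.sum_mul, Finset.mul_sum]
    exact Finset.sum_congr rfl fun T _ => by ring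
  have r : ∀ x, Wt w x * (f x * esp w S h x)
      = ∑ T ∈ S.powerset, (-1:ℝ) ^ (S.card + T.card) * (Wt w x * (f x * condExp w T h x)) := by
    intro x
    have : esp w S h x = ∑ T ∈ S.powerset, (-1:ℝ) ^ (S.card + T.card) * condExp w T h x := rfl
    rw [this, Finset.mul_sum, Finset.mul_sum]
    exact Finset.sum_congr rfl fun T _ => by ring
  simp only [l, r]
  rw [Finset.sum_comm]
  nth_rewrite 2 [Finset.sum_comm]
  refine Finset.sum_congr rfl fun T _ => ?_
  rw [← Finset.mul_sum, ← Finset.mul_sum, condExp_adjoint]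

lemma inn_esp_esp_zero (hw : ∀ a, 0 < w a) (hw1 : ∑ a, w a = 1) {S T : Finset (Fin n)}
    (hST : S ≠ T) (f g : (Fin n → Ω) → ℝ) :
    inn w (esp w S f) (esp w T g) = 0 := by
  rw [inn_esp_left hw1]
  have : esp w S (esp w T g) = 0 := esp_esp hw1 hST g
  rw [inn_comm, this]
  have : ((0 : (Fin n → Ω) → ℝ)) = (fun _ => (0:ℝ)) := rfl
  rw [this, inn_comm, inn_zero_right]


def sub1 (j : Fin n) (a : Ω) (g : (Fin n → Ω) → ℝ) : (Fin n → Ω) → ℝ :=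
  fun x => g (Function.update x j a)

lemma dOn_sub1 {A : Finset (Fin n)} {g : (Fin n → Ω) → ℝ} (hg : DOn A g) (j : Fin n) (a : Ω) :
    DOn (A.erase j) (sub1 j a g) := by
  intro x y hxy
  refine hg _ _ fun i hi => ?_
  by_cases hij : i = j
  · subst hij; simp
  · rw [Function.update_of_ne hij, Function.update_of_ne hij]
    exact hxy i (Finset.mem_erase.mpr ⟨hij, hi⟩)

lemma Wt_update (j : Fin n) (a : Ω) (x : Fin n → Ω) :
    w (x j) * Wt w (Function.update x j a) = w a * Wt w x := by
  unfold Wt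
  rw [← Finset.mul_prod_erase univ (fun i => w (Function.update x j a i)) (Finset.mem_univ j)]
  rw [← Finset.mul_prod_erase univ (fun i => w (x i)) (Finset.mem_univ j)]
  simp only [Function.update_self]
  rw [show ∏ i ∈ univ.erase j, w (Function.update x j a i) = ∏ i ∈ univ.erase j, w (x i) from
    Finset.prod_congr rfl fun i hi => by
      rw [Function.update_of_ne (Finset.mem_erase.mp hi).1]]
  ring

lemma sum_update (hw1 : ∑ a, w a = 1) (j : Fin n) (φ : (Fin n → Ω) → ℝ) :
    ∑ a, w a * ∑ x, Wt w x * φ (Function.update x j a) = ∑ x, Wt w x * φ x := by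
  classical
  have e : Function.Involutive
      (fun p : Ω × (Fin n → Ω) => (p.2 j, Function.update p.2 j p.1)) := by
    intro p
    ext1
    · simp
    · simp only [Function.update_idem, Function.update_self]
      exact Function.update_eq_self j p.2
  calc ∑ a, w a * ∑ x, Wt w x * φ (Function.update x j a)
      = ∑ p : Ω × (Fin n → Ω), w p.1 * Wt w p.2 * φ (Function.update p.2 j p.1) := by
        rw [Fintype.sum_prod_type]
        refine Finset.sum_congr rfl fun a _ => ?_
        rw [Finset.mul_sum]
        exact Finset.sum_congr rfl fun x _ => by ring
    _ = ∑ p : Ω × (Fin n → Ω), w p.1 * Wt w p.2 * φ p.2 := by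
        refine Fintype.sum_bijective _ e.bijective _ _ fun p => ?_
        dsimp only
        rw [show w (p.2 j) * Wt w (Function.update p.2 j p.1) = w p.1 * Wt w p.2 from
          Wt_update j p.1 p.2]
    _ = ∑ x, Wt w x * φ x := by
        rw [Fintype.sum_prod_type]
        have hsplit : ∀ a : Ω, ∑ y : Fin n → Ω, w (a, y).1 * Wt w (a, y).2 * φ (a, y).2
            = w a * ∑ y : Fin n → Ω, Wt w y * φ y := by
          intro a
          rw [Finset.mul_sum]
          exact Finset.sum_congr rfl fun y _ => by ring
        simp only [hsplit]
        rw [← Finset.sum_mul, hw1, one_mul]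

lemma cs (hw : ∀ a, 0 < w a) (u v : (Fin n → Ω) → ℝ) :
    (∑ x, Wt w x * (u x * v x)) ^ 2
      ≤ (∑ x, Wt w x * (u x) ^ 2) * (∑ x, Wt w x * (v x) ^ 2) := by
  have h := Finset.sum_mul_sq_le_sq_mul_sq univ
      (fun x => Real.sqrt (Wt w x) * u x) (fun x => Real.sqrt (Wt w x) * v x)
  have e1 : ∀ x : Fin n → Ω,
      (Real.sqrt (Wt w x) * u x) * (Real.sqrt (Wt w x) * v x) = Wt w x * (u x * v x) := by
    intro x
    have h2 : Real.sqrt (Wt w x) * Real.sqrt (Wt w x) = Wt w x :=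
      Real.mul_self_sqrt (Wt_nonneg hw x)
    linear_combination u x * v x * h2
  have e2 : ∀ x : Fin n → Ω,
      (Real.sqrt (Wt w x) * u x) ^ 2 = Wt w x * (u x) ^ 2 := by
    intro x
    rw [mul_pow, Real.sq_sqrt (Wt_nonneg hw x)]
  have e3 : ∀ x : Fin n → Ω,
      (Real.sqrt (Wt w x) * v x) ^ 2 = Wt w x * (v x) ^ 2 := by
    intro x
    rw [mul_pow, Real.sq_sqrt (Wt_nonneg hw x)]
  simp only [e1, e2, e3] at h
  exact h

lemma sqrt_exp_half (y : ℝ) : Real.sqrt (Real.exp y) = Real.exp (y / 2) := by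
  have h : Real.exp (y/2) ^ 2 = Real.exp y := by
    rw [sq, ← Real.exp_add]
    norm_num
  rw [← h, Real.sqrt_sq (Real.exp_nonneg _)]

lemma sqrt_mul_le_add_half (p q : ℝ) (hp : 0 ≤ p) (hq : 0 ≤ q) :
    Real.sqrt (p * q) ≤ (p + q) / 2 := by
  have h1 : Real.sqrt (p*q) ≤ Real.sqrt (((p+q)/2)^2) := by
    apply Real.sqrt_le_sqrt
    nlinarith [sq_nonneg (p - q)]
  rwa [Real.sqrt_sq (by nlinarith)] at h1


lemma esp_finsum {ι : Type*} (S : Finset (Fin n)) (P : Finset ι)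
    (g : ι → (Fin n → Ω) → ℝ) :
    esp w S (fun x => ∑ t ∈ P, g t x) = fun x => ∑ t ∈ P, esp w S (g t) x := by
  funext x
  have h1 : esp w S (fun x => ∑ t ∈ P, g t x) x
      = ∑ T ∈ S.powerset, (-1:ℝ) ^ (S.card + T.card)
          * condExp w T (fun x => ∑ t ∈ P, g t x) x := rfl
  rw [h1]
  simp only [condExp_finsum]
  have h2 : ∀ T ∈ S.powerset, (-1:ℝ) ^ (S.card + T.card) * (∑ t ∈ P, condExp w T (g t) x)
      = ∑ t ∈ P, (-1:ℝ) ^ (S.card + T.card) * condExp w T (g t) x := by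
    intro T _
    rw [Finset.mul_sum]
  rw [Finset.sum_congr rfl h2, Finset.sum_comm]
  exact Finset.sum_congr rfl fun t _ => rfl

lemma hc_const (hw : ∀ a, 0 < w a) (hw1 : ∑ a, w a = 1) (μ : ℝ) (hμ : 0 < μ)
    (hμw : ∀ a, μ ≤ w a) [Nonempty Ω] (d : ℕ) (f : (Fin n → Ω) → ℝ)
    (hf : ∀ T : Finset (Fin n), T ≠ ∅ → esp w T f = 0) :
    ∑ x, Wt w x * (f x)^4 ≤ (16/μ)^d * (∑ x, Wt w x * (f x)^2)^2 := by
  classical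
  have hμ1 : μ ≤ 1 := by
    obtain ⟨a⟩ := (inferInstance : Nonempty Ω)
    have h1 : w a ≤ ∑ b, w b :=
      Finset.single_le_sum (fun b _ => (hw b).le) (Finset.mem_univ a)
    rw [hw1] at h1
    exact le_trans (hμw a) h1
  have hK1 : (1:ℝ) ≤ 16/μ := by
    rw [le_div_iff₀ hμ]; nlinarith
  have hKd1 : (1:ℝ) ≤ (16/μ)^d := one_le_pow₀ hK1
  set c := ∑ y, Wt w y * f y with hc
  have hfc : ∀ x, f x = c := by
    intro x
    have hdec := esp_decomp hw1 f x
    rw [Finset.sum_eq_single (∅ : Finset (Fin n))] at hdec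
    · rw [← hdec]
      have h0 : esp w (∅ : Finset (Fin n)) f x = condExp w ∅ f x := by
        unfold esp
        simp
      rw [h0, condExp_eq, hc]
      refine Finset.sum_congr rfl fun y _ => ?_
      have hy : mrg (∅ : Finset (Fin n)) x y = y := by
        funext i
        simp [mrg]
      rw [hy]
    · intro S _ hS
      exact (congrFun (hf S hS) x).trans rfl
    · intro hmem
      exact absurd (Finset.mem_univ (∅ : Finset (Fin n))) hmem
  have h4 : ∑ x, Wt w x * (f x)^4 = c^4 := by
    have : ∀ x : Fin n → Ω, Wt w x * (f x)^4 = Wt w x * c^4 := fun x => by rw [hfc x]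
    rw [Finset.sum_congr rfl fun x _ => this x, ← Finset.sum_mul, sum_Wt hw1, one_mul]
  have h2 : ∑ x, Wt w x * (f x)^2 = c^2 := by
    have : ∀ x : Fin n → Ω, Wt w x * (f x)^2 = Wt w x * c^2 := fun x => by rw [hfc x]
    rw [Finset.sum_congr rfl fun x _ => this x, ← Finset.sum_mul, sum_Wt hw1, one_mul]
  rw [h4, h2]
  nlinarith [sq_nonneg (c^2), hKd1]

set_option maxHeartbeats 1000000 in
theorem hc (hw : ∀ a, 0 < w a) (hw1 : ∑ a, w a = 1) (μ : ℝ) (hμ : 0 < μ)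
    (hμw : ∀ a, μ ≤ w a) [Nonempty Ω] :
    ∀ (J : Finset (Fin n)) (d : ℕ) (f : (Fin n → Ω) → ℝ),
      (∀ T : Finset (Fin n), ¬(T ⊆ J ∧ T.card ≤ d) → esp w T f = 0) →
      ∑ x, Wt w x * (f x)^4 ≤ (16/μ)^d * (∑ x, Wt w x * (f x)^2)^2 := by
  classical
  intro J
  induction J using Finset.strongInduction with
  | _ J ih =>
    intro d f hf
    rcases Nat.eq_zero_or_pos d with rfl | hd
    · refine hc_const hw hw1 μ hμ hμw 0 f fun T hT => hf T ?_
      rintro ⟨-, h2⟩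
      exact hT (Finset.card_eq_zero.mp (Nat.le_zero.mp h2))
    rcases Finset.eq_empty_or_nonempty J with rfl | ⟨j, hj⟩
    · refine hc_const hw hw1 μ hμ hμw d f fun T hT => hf T ?_
      rintro ⟨h1, -⟩
      exact hT (Finset.subset_empty.mp h1)
    set K : ℝ := 16 / μ with hK
    have hμ1 : μ ≤ 1 := by
      obtain ⟨a⟩ := (inferInstance : Nonempty Ω)
      have h1 : w a ≤ ∑ b, w b :=
        Finset.single_le_sum (fun b _ => (hw b).le) (Finset.mem_univ a)
      rw [hw1] at h1
      exact le_trans (hμw a) h1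
    have hK0 : 0 < K := by rw [hK]; positivity
    have hKd0 : 0 < K ^ d := pow_pos hK0 d
    set g := condExp w (({j} : Finset (Fin n))ᶜ) f with hgdef
    set h := fun x => f x - g x with hhdef
    have hfgh : ∀ x, f x = g x + h x := fun x => by rw [hhdef]; ring
    have hgd : DOn (({j} : Finset (Fin n))ᶜ) g := hgdef ▸ dOn_condExp _ f
    have hEg : condExp w (({j} : Finset (Fin n))ᶜ) g = g := condExp_of_dOn hw1 hgd
    have hEh : condExp w (({j} : Finset (Fin n))ᶜ) h = fun _ => 0 := by
      rw [hhdef, condExp_sub]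
      funext x
      rw [hEg, ← hgdef]
      ring
    have hg3d : DOn (({j} : Finset (Fin n))ᶜ) (fun x => (g x)^3) := by
      intro x y hxy
      simp only []
      rw [hgd x y hxy]
    have hEg3 : condExp w (({j} : Finset (Fin n))ᶜ) (fun x => (g x)^3) = fun x => (g x)^3 :=
      condExp_of_dOn hw1 hg3d
    have cross1 : ∑ x, Wt w x * (g x * h x) = 0 := by
      have h1 := condExp_adjoint (w := w) (({j} : Finset (Fin n))ᶜ) g h
      rw [hEg, hEh] at h1
      simpa using h1
    have cross3 : ∑ x, Wt w x * ((g x)^3 * h x) = 0 := by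
      have h1 := condExp_adjoint (w := w) (({j} : Finset (Fin n))ᶜ) (fun x => (g x)^3) h
      rw [hEg3, hEh] at h1
      simpa using h1
    have hgdeg : ∀ T : Finset (Fin n), ¬(T ⊆ J.erase j ∧ T.card ≤ d) → esp w T g = 0 := by
      intro T hT
      rw [hgdef, esp_condExp_compl hw1]
      by_cases hjT : j ∈ T
      · rw [if_pos hjT]; rfl
      · rw [if_neg hjT]
        apply hf
        rintro ⟨h1, h2⟩
        refine hT ⟨fun i hi => Finset.mem_erase.mpr ⟨fun hij => hjT (hij ▸ hi), h1 hi⟩, h2⟩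
    have hg4 := ih (J.erase j) (Finset.erase_ssubset hj) d g hgdeg
    have hh_sum : ∀ x, h x
        = ∑ S ∈ univ.filter (fun S : Finset (Fin n) => j ∈ S), esp w S f x := by
      intro x
      have hdec := esp_decomp hw1 f x
      have hEfx : g x = ∑ S : Finset (Fin n), (if j ∈ S then 0 else esp w S f x) := by
        rw [hgdef]
        have hfe : f = (fun y => ∑ S : Finset (Fin n), esp w S f y) := by
          funext y
          exact (esp_decomp hw1 f y).symm
        conv_lhs => rw [hfe]
        rw [condExp_finsum]
        refine Finset.sum_congr rfl fun S _ => ?_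
        rw [condExp_compl_esp hw1]
        by_cases hjS : j ∈ S <;> simp [hjS]
      rw [hhdef]
      simp only []
      rw [hEfx, ← hdec, ← Finset.sum_sub_distrib, Finset.sum_filter]
      refine Finset.sum_congr rfl fun S _ => ?_
      by_cases hjS : j ∈ S <;> simp [hjS]
    have hslice : ∀ (a : Ω) (T : Finset (Fin n)),
        ¬(T ⊆ J.erase j ∧ T.card + 1 ≤ d) → esp w T (sub1 j a h) = 0 := by
      intro a T hT
      have hsub : sub1 j a h = fun x => ∑ S ∈ univ.filter (fun S : Finset (Fin n) => j ∈ S),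
          sub1 j a (esp w S f) x := by
        funext x
        exact hh_sum (Function.update x j a)
      rw [hsub, esp_finsum]
      funext x
      simp only [Pi.zero_apply]
      refine Finset.sum_eq_zero fun S hS => ?_
      have hjS : j ∈ S := (Finset.mem_filter.mp hS).2
      by_cases hSok : S ⊆ J ∧ S.card ≤ d
      · have hdon2 : DOn (S.erase j) (sub1 j a (esp w S f)) := dOn_sub1 (dOn_esp S f) j a
        have hTS : ¬ T ⊆ S.erase j := by
          intro hsub2
          apply hT
          constructor
          · exact hsub2.trans (Finset.erase_subset_erase j hSok.1)
          · have h1 : T.card ≤ (S.erase j).card := Finset.card_le_card hsub2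
            rw [Finset.card_erase_of_mem hjS] at h1
            have h2 : 0 < S.card := Finset.card_pos.mpr ⟨j, hjS⟩
            omega
        have h0 := esp_eq_zero_of_not_subset hw1 hdon2 hTS
        rw [h0]
        rfl
      · have h0 : esp w S f = 0 := hf S hSok
        rw [h0]
        have h1 : sub1 j a (0 : (Fin n → Ω) → ℝ) = (fun _ => (0:ℝ)) := rfl
        rw [h1, esp_zero]
        rfl
    have hB : ∀ a : Ω, ∑ x, Wt w x * (sub1 j a h x)^4
        ≤ K^(d-1) * (∑ x, Wt w x * (sub1 j a h x)^2)^2 := by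
      intro a
      refine ih (J.erase j) (Finset.erase_ssubset hj) (d-1) _ fun T hT => ?_
      apply hslice a T
      rintro ⟨h1, h2⟩
      exact hT ⟨h1, by omega⟩
    have hfub4 : ∑ a, w a * ∑ x, Wt w x * (sub1 j a h x)^4 = ∑ x, Wt w x * (h x)^4 :=
      sum_update hw1 j (fun x => (h x)^4)
    have hfub2 : ∑ a, w a * ∑ x, Wt w x * (sub1 j a h x)^2 = ∑ x, Wt w x * (h x)^2 :=
      sum_update hw1 j (fun x => (h x)^2)
    set q := ∑ x, Wt w x * (h x)^2 with hqdef
    set p := ∑ x, Wt w x * (g x)^2 with hpdef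
    set A := ∑ x, Wt w x * (g x)^4 with hAdef
    set B := ∑ x, Wt w x * (h x)^4 with hBdef
    have hp0 : 0 ≤ p := Finset.sum_nonneg fun x _ => mul_nonneg (Wt_nonneg hw x) (sq_nonneg _)
    have hq0 : 0 ≤ q := Finset.sum_nonneg fun x _ => mul_nonneg (Wt_nonneg hw x) (sq_nonneg _)
    have hA0 : 0 ≤ A := Finset.sum_nonneg fun x _ => mul_nonneg (Wt_nonneg hw x) (by positivity)
    have hB0 : 0 ≤ B := Finset.sum_nonneg fun x _ => mul_nonneg (Wt_nonneg hw x) (by positivity)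
    have hqa_nonneg : ∀ a : Ω, 0 ≤ ∑ x, Wt w x * (sub1 j a h x)^2 :=
      fun a => Finset.sum_nonneg fun x _ => mul_nonneg (Wt_nonneg hw x) (sq_nonneg _)
    have hqa_le : ∀ a : Ω, ∑ x, Wt w x * (sub1 j a h x)^2 ≤ q / μ := by
      intro a
      have h1 : w a * (∑ x, Wt w x * (sub1 j a h x)^2) ≤ q := by
        rw [← hfub2]
        exact Finset.single_le_sum
          (f := fun b => w b * ∑ x, Wt w x * (sub1 j b h x)^2)
          (fun b _ => mul_nonneg (hw b).le (hqa_nonneg b)) (Finset.mem_univ a)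
      rw [le_div_iff₀ hμ]
      nlinarith [mul_le_mul_of_nonneg_right (hμw a) (hqa_nonneg a)]
    have hBtot : B ≤ K^d/16 * q^2 := by
      rw [← hfub4]
      have step1 : ∑ a, w a * ∑ x, Wt w x * (sub1 j a h x)^4
          ≤ ∑ a, w a * (K^(d-1) * ((q/μ) * (∑ x, Wt w x * (sub1 j a h x)^2))) := by
        refine Finset.sum_le_sum fun a _ => ?_
        refine mul_le_mul_of_nonneg_left ?_ (hw a).le
        refine le_trans (hB a) ?_
        refine mul_le_mul_of_nonneg_left ?_ (pow_pos hK0 (d-1)).le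
        nlinarith [hqa_le a, hqa_nonneg a]
      refine le_trans step1 ?_
      have step2 : ∑ a, w a * (K^(d-1) * ((q/μ) * (∑ x, Wt w x * (sub1 j a h x)^2)))
          = K^(d-1) * (q/μ) * ∑ a, w a * ∑ x, Wt w x * (sub1 j a h x)^2 := by
        rw [Finset.mul_sum]
        exact Finset.sum_congr rfl fun a _ => by ring
      rw [step2, hfub2]
      have hKK : K^(d-1) * K = K^d := by
        rw [← pow_succ]
        congr 1
        omega
      have hμK : 1/μ = K/16 := by
        rw [hK]
        field_simp
      have heq : K^(d-1) * (q/μ) * q = K^d/16 * q^2 := by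
        rw [← hKK]
        field_simp
        have hinv : μ * μ⁻¹ = 1 := mul_inv_cancel₀ (ne_of_gt hμ)
        linear_combination (-(q ^ 2 * 16)) * hinv
      rw [heq]
    have hA' : A ≤ K^d * p^2 := hg4
    have hsum2 : ∑ x, Wt w x * (f x)^2 = p + q := by
      have hpt : ∀ x : Fin n → Ω, Wt w x * (f x)^2
          = Wt w x * (g x)^2 + 2*(Wt w x * (g x * h x)) + Wt w x * (h x)^2 :=
        fun x => by rw [hfgh x]; ring
      rw [Finset.sum_congr rfl fun x _ => hpt x, Finset.sum_add_distrib,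
        Finset.sum_add_distrib, ← Finset.mul_sum, cross1, ← hpdef, ← hqdef]
      ring
    have hsum4 : ∑ x, Wt w x * (f x)^4
        = A + 6 * (∑ x, Wt w x * ((g x)^2 * (h x)^2))
          + 4 * (∑ x, Wt w x * (g x * (h x)^3)) + B := by
      have hpt : ∀ x : Fin n → Ω, Wt w x * (f x)^4
          = Wt w x * (g x)^4 + 4*(Wt w x * ((g x)^3 * h x))
            + 6*(Wt w x * ((g x)^2 * (h x)^2)) + 4*(Wt w x * (g x * (h x)^3))
            + Wt w x * (h x)^4 :=
        fun x => by rw [hfgh x]; ring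
      rw [Finset.sum_congr rfl fun x _ => hpt x, Finset.sum_add_distrib,
        Finset.sum_add_distrib, Finset.sum_add_distrib, Finset.sum_add_distrib,
        ← Finset.mul_sum, ← Finset.mul_sum, ← Finset.mul_sum, cross3, ← hAdef, ← hBdef]
      ring
    have hG2H2pos : 0 ≤ ∑ x, Wt w x * ((g x)^2 * (h x)^2) :=
      Finset.sum_nonneg fun x _ => mul_nonneg (Wt_nonneg hw x) (by positivity)
    have hG2H2 : ∑ x, Wt w x * ((g x)^2 * (h x)^2) ≤ Real.sqrt A * Real.sqrt B := by
      have h1 := cs hw (fun x => (g x)^2) (fun x => (h x)^2)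
      have e2 : ∀ x : Fin n → Ω, ((g x)^2)^2 = (g x)^4 := fun x => by ring
      have e3 : ∀ x : Fin n → Ω, ((h x)^2)^2 = (h x)^4 := fun x => by ring
      simp only [e2, e3] at h1
      rw [← hAdef, ← hBdef] at h1
      calc ∑ x, Wt w x * ((g x)^2 * (h x)^2)
          = Real.sqrt ((∑ x, Wt w x * ((g x)^2 * (h x)^2))^2) := (Real.sqrt_sq hG2H2pos).symm
        _ ≤ Real.sqrt (A * B) := Real.sqrt_le_sqrt h1
        _ = Real.sqrt A * Real.sqrt B := Real.sqrt_mul hA0 _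
    have hGH3 : ∑ x, Wt w x * (g x * (h x)^3)
        ≤ Real.sqrt (Real.sqrt A * Real.sqrt B * B) := by
      have h1 := cs hw (fun x => g x * h x) (fun x => (h x)^2)
      have e1 : ∀ x : Fin n → Ω, (g x * h x) * (h x)^2 = g x * (h x)^3 := fun x => by ring
      have e2 : ∀ x : Fin n → Ω, (g x * h x)^2 = (g x)^2 * (h x)^2 := fun x => by ring
      have e3 : ∀ x : Fin n → Ω, ((h x)^2)^2 = (h x)^4 := fun x => by ring
      simp only [e1, e2, e3] at h1
      rw [← hBdef] at h1
      calc ∑ x, Wt w x * (g x * (h x)^3)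
          ≤ |∑ x, Wt w x * (g x * (h x)^3)| := le_abs_self _
        _ = Real.sqrt ((∑ x, Wt w x * (g x * (h x)^3))^2) := (Real.sqrt_sq_eq_abs _).symm
        _ ≤ Real.sqrt ((∑ x, Wt w x * ((g x)^2 * (h x)^2)) * B) := Real.sqrt_le_sqrt h1
        _ ≤ Real.sqrt (Real.sqrt A * Real.sqrt B * B) :=
            Real.sqrt_le_sqrt (mul_le_mul_of_nonneg_right hG2H2 hB0)
    have hsA : Real.sqrt A ≤ Real.sqrt (K^d) * p := by
      have h1 := Real.sqrt_le_sqrt hA'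
      rwa [Real.sqrt_mul hKd0.le, Real.sqrt_sq hp0] at h1
    have hsB : Real.sqrt B ≤ Real.sqrt (K^d) * q / 4 := by
      have h1 := Real.sqrt_le_sqrt hBtot
      have hsq : Real.sqrt (K^d) ^ 2 = K^d := Real.sq_sqrt hKd0.le
      have he : (Real.sqrt (K^d)*q/4)^2 = K^d/16*q^2 := by
        rw [div_pow, mul_pow, hsq]
        ring
      rw [← he, Real.sqrt_sq (div_nonneg (mul_nonneg (Real.sqrt_nonneg _) hq0) (by norm_num))] at h1
      exact h1
    have hsAB : Real.sqrt A * Real.sqrt B ≤ K^d * (p*q)/4 := by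
      have hsq : Real.sqrt (K^d) ^ 2 = K^d := Real.sq_sqrt hKd0.le
      have h1 := mul_le_mul hsA hsB (Real.sqrt_nonneg B) (mul_nonneg (Real.sqrt_nonneg _) hp0)
      calc Real.sqrt A * Real.sqrt B ≤ (Real.sqrt (K^d) * p) * (Real.sqrt (K^d) * q / 4) := h1
        _ = K^d * (p*q)/4 := by linear_combination (p*q/4) * hsq
    have hb2 : Real.sqrt (Real.sqrt A * Real.sqrt B * B) ≤ K^d * q * (p+q) / 16 := by
      have hin : Real.sqrt A * Real.sqrt B * B ≤ (K^d*(p*q)/4) * (K^d/16*q^2) :=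
        mul_le_mul hsAB hBtot hB0
          (div_nonneg (mul_nonneg hKd0.le (mul_nonneg hp0 hq0)) (by norm_num))
      have he : (K^d*(p*q)/4) * (K^d/16*q^2) = (K^d*q/8)^2 * (p*q) := by ring
      rw [he] at hin
      calc Real.sqrt (Real.sqrt A * Real.sqrt B * B)
          ≤ Real.sqrt ((K^d*q/8)^2 * (p*q)) := Real.sqrt_le_sqrt hin
        _ = (K^d*q/8) * Real.sqrt (p*q) := by
            rw [Real.sqrt_mul (sq_nonneg _),
              Real.sqrt_sq (div_nonneg (mul_nonneg hKd0.le hq0) (by norm_num))]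
        _ ≤ (K^d*q/8) * ((p+q)/2) :=
            mul_le_mul_of_nonneg_left (sqrt_mul_le_add_half p q hp0 hq0)
              (div_nonneg (mul_nonneg hKd0.le hq0) (by norm_num))
        _ = K^d*q*(p+q)/16 := by ring
    rw [hsum4, hsum2]
    have hfinal1 : ∑ x, Wt w x * ((g x)^2 * (h x)^2) ≤ K^d * (p*q)/4 := le_trans hG2H2 hsAB
    have hfinal2 : ∑ x, Wt w x * (g x * (h x)^3) ≤ K^d * q * (p+q)/16 := le_trans hGH3 hb2
    nlinarith [hA', hBtot, hfinal1, hfinal2, mul_nonneg (mul_nonneg hKd0.le hp0) hq0,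
      mul_nonneg (mul_nonneg hKd0.le hq0) hq0]


lemma inn_sumesp (hw : ∀ a, 0 < w a) (hw1 : ∑ a, w a = 1)
    (P Q : Finset (Finset (Fin n))) (hPQ : P ⊆ Q) (f : (Fin n → Ω) → ℝ) :
    inn w (fun x => ∑ S ∈ P, esp w S f x) (fun x => ∑ T ∈ Q, esp w T f x)
      = ∑ S ∈ P, inn w (esp w S f) (esp w S f) := by
  rw [inn_sum_left]
  refine Finset.sum_congr rfl fun S hS => ?_
  rw [inn_sum_right]
  rw [Finset.sum_eq_single_of_mem S (hPQ hS)]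
  intro T _ hTS
  exact inn_esp_esp_zero hw hw1 (fun hST => hTS hST.symm) f f

lemma esp_empty_const (hw1 : ∑ a, w a = 1) (f : (Fin n → Ω) → ℝ) :
    esp w (∅ : Finset (Fin n)) f = fun _ => ∑ y, Wt w y * f y := by
  funext x
  have h0 : esp w (∅ : Finset (Fin n)) f x = condExp w ∅ f x := by
    unfold esp
    simp
  rw [h0, condExp_eq]
  refine Finset.sum_congr rfl fun y _ => ?_
  have hy : mrg (∅ : Finset (Fin n)) x y = y := by
    funext i
    simp [mrg]
  rw [hy]

lemma delta_sum (hw1 : ∑ a, w a = 1) (i : Fin n) (f : (Fin n → Ω) → ℝ) (x : Fin n → Ω) :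
    f x - condExp w (({i} : Finset (Fin n))ᶜ) f x
      = ∑ S ∈ univ.filter (fun S : Finset (Fin n) => i ∈ S), esp w S f x := by
  have hdec := esp_decomp hw1 f x
  have hEfx : condExp w (({i} : Finset (Fin n))ᶜ) f x
      = ∑ S : Finset (Fin n), (if i ∈ S then 0 else esp w S f x) := by
    have hfe : f = (fun y => ∑ S : Finset (Fin n), esp w S f y) := by
      funext y
      exact (esp_decomp hw1 f y).symm
    conv_lhs => rw [hfe]
    rw [condExp_finsum]
    refine Finset.sum_congr rfl fun S _ => ?_
    rw [condExp_compl_esp hw1]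
    by_cases hiS : i ∈ S <;> simp [hiS]
  rw [hEfx, ← hdec, ← Finset.sum_sub_distrib, Finset.sum_filter]
  refine Finset.sum_congr rfl fun S _ => ?_
  by_cases hiS : i ∈ S <;> simp [hiS]

lemma esp_self_nonneg (hw : ∀ a, 0 < w a) (S : Finset (Fin n)) (f : (Fin n → Ω) → ℝ) :
    0 ≤ inn w (esp w S f) (esp w S f) := inn_self_nonneg hw _


set_option maxHeartbeats 1000000 in
lemma per_i (hw : ∀ a, 0 < w a) (hw1 : ∑ a, w a = 1) [Nonempty Ω]
    (μs : ℝ) (hμpos : 0 < μs) (hμle : ∀ a, μs ≤ w a) (hμhalf : μs ≤ 1/2)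
    (f : (Fin n → Ω) → ℝ) (i : Fin n) (l1i l2i : ℝ)
    (hl1 : l1i = ∑ x, Wt w x * |f x - condExp w (({i} : Finset (Fin n))ᶜ) f x|)
    (hl2sq : l2i^2 = ∑ x, Wt w x * (f x - condExp w (({i} : Finset (Fin n))ᶜ) f x)^2)
    (hl2nn : 0 ≤ l2i)
    (hl1pos : 0 < l1i) (hl12 : l1i < l2i) :
    ∃ d : ℕ, 1 ≤ d ∧
      (∑ S ∈ univ.filter (fun S : Finset (Fin n) => i ∈ S ∧ S.card ≤ d),
          inn w (esp w S f) (esp w S f))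
        + (∑ S ∈ univ.filter (fun S : Finset (Fin n) => i ∈ S),
            inn w (esp w S f) (esp w S f)) / (d + 1)
      ≤ 8 * Real.log (1/μs) * (l2i^2 / Real.log (l2i / l1i)) := by
  classical
  have hl2pos : 0 < l2i := lt_trans hl1pos hl12
  set Δf : (Fin n → Ω) → ℝ := fun x => f x - condExp w (({i} : Finset (Fin n))ᶜ) f x
    with hΔdef
  have hΔsum : (fun x => ∑ S ∈ univ.filter (fun S : Finset (Fin n) => i ∈ S), esp w S f x)
      = Δf := by
    funext x
    exact (delta_sum hw1 i f x).symm
  -- τ identity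
  have hτ : ∑ S ∈ univ.filter (fun S : Finset (Fin n) => i ∈ S),
      inn w (esp w S f) (esp w S f) = l2i^2 := by
    have h1 := inn_sumesp hw hw1 (univ.filter (fun S : Finset (Fin n) => i ∈ S))
      (univ.filter (fun S : Finset (Fin n) => i ∈ S)) (subset_refl _) f
    rw [hΔsum] at h1
    rw [← h1, hl2sq]
    unfold inn
    exact Finset.sum_congr rfl fun x _ => by ring
  have hν0 : ∀ S : Finset (Fin n), 0 ≤ inn w (esp w S f) (esp w S f) :=
    fun S => inn_self_nonneg hw _
  -- general bound on truncated sums via hypercontractivity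
  have hKpos : (0:ℝ) < 16/μs := by positivity
  have hMle : ∀ d : ℕ,
      (∑ S ∈ univ.filter (fun S : Finset (Fin n) => i ∈ S ∧ S.card ≤ d),
        inn w (esp w S f) (esp w S f)) ≤ Real.sqrt ((16/μs)^d) * l1i * l2i := by
    intro d
    set u : (Fin n → Ω) → ℝ :=
      fun x => ∑ S ∈ univ.filter (fun S : Finset (Fin n) => i ∈ S ∧ S.card ≤ d), esp w S f x
      with hudef
    set M : ℝ := ∑ S ∈ univ.filter (fun S : Finset (Fin n) => i ∈ S ∧ S.card ≤ d),
      inn w (esp w S f) (esp w S f) with hMdef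
    have hM0 : 0 ≤ M := Finset.sum_nonneg fun S _ => hν0 S
    have hMuu : inn w u u = M := by
      rw [hudef, hMdef]
      exact inn_sumesp hw hw1 _ _ (subset_refl _) f
    have hMuΔ : inn w u Δf = M := by
      rw [← hΔsum, hudef, hMdef]
      refine inn_sumesp hw hw1 _ _ ?_ f
      intro S hS
      rw [Finset.mem_filter] at hS ⊢
      exact ⟨hS.1, hS.2.1⟩
    have hu_deg : ∀ T : Finset (Fin n), ¬(T ⊆ univ ∧ T.card ≤ d) → esp w T u = 0 := by
      intro T hT
      have hTd : d < T.card := by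
        by_contra hle
        exact hT ⟨Finset.subset_univ T, not_lt.mp hle⟩
      rw [hudef, esp_finsum]
      funext x
      simp only [Pi.zero_apply]
      refine Finset.sum_eq_zero fun S hS => ?_
      have hScard : S.card ≤ d := (Finset.mem_filter.mp hS).2.2
      have hTS : T ≠ S := fun hh => by
        subst hh
        omega
      exact (congrFun (esp_esp hw1 hTS f) x).trans rfl
    have hu4 := hc hw hw1 μs hμpos hμle univ d u hu_deg
    have hu2 : ∑ x, Wt w x * (u x)^2 = M := by
      rw [← hMuu]
      unfold inn
      exact Finset.sum_congr rfl fun x _ => by ring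
    rw [hu2] at hu4
    -- Cauchy–Schwarz chain
    have hWnn := Wt_nonneg hw (n := n)
    have habs : M ≤ ∑ x, Wt w x * (Real.sqrt (|Δf x|) * (Real.sqrt (|Δf x|) * |u x|)) := by
      rw [← hMuΔ]
      unfold inn
      refine Finset.sum_le_sum fun x _ => ?_
      refine mul_le_mul_of_nonneg_left ?_ (hWnn x)
      have h1 : u x * Δf x ≤ |u x * Δf x| := le_abs_self _
      have h2 : |u x * Δf x| = |Δf x| * |u x| := by rw [abs_mul]; ring
      have h3 : Real.sqrt (|Δf x|) * (Real.sqrt (|Δf x|) * |u x|) = |Δf x| * |u x| := by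
        rw [← mul_assoc, Real.mul_self_sqrt (abs_nonneg _)]
      linarith
    have hcs1 := cs hw (fun x => Real.sqrt (|Δf x|)) (fun x => Real.sqrt (|Δf x|) * |u x|)
    have e1 : ∀ x : Fin n → Ω, (Real.sqrt (|Δf x|))^2 = |Δf x| :=
      fun x => Real.sq_sqrt (abs_nonneg _)
    have e2 : ∀ x : Fin n → Ω, (Real.sqrt (|Δf x|) * |u x|)^2 = |Δf x| * (u x)^2 := by
      intro x
      rw [mul_pow, Real.sq_sqrt (abs_nonneg _), sq_abs]
    simp only [e1, e2] at hcs1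
    have hcs2 := cs hw (fun x => |Δf x|) (fun x => (u x)^2)
    have e3 : ∀ x : Fin n → Ω, (|Δf x|)^2 = (Δf x)^2 := fun x => sq_abs _
    have e4 : ∀ x : Fin n → Ω, ((u x)^2)^2 = (u x)^4 := fun x => by ring
    simp only [e3, e4] at hcs2
    -- combine
    have hAbsNonneg : 0 ≤ ∑ x, Wt w x * (|Δf x| * (u x)^2) :=
      Finset.sum_nonneg fun x _ => mul_nonneg (hWnn x) (mul_nonneg (abs_nonneg _) (sq_nonneg _))
    have hstep2 : ∑ x, Wt w x * (|Δf x| * (u x)^2)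
        ≤ l2i * (Real.sqrt ((16/μs)^d) * M) := by
      have hb : (∑ x, Wt w x * (|Δf x| * (u x)^2))^2
          ≤ l2i^2 * ((16/μs)^d * M^2) := by
        calc (∑ x, Wt w x * (|Δf x| * (u x)^2))^2
            ≤ (∑ x, Wt w x * (Δf x)^2) * (∑ x, Wt w x * (u x)^4) := hcs2
          _ ≤ (∑ x, Wt w x * (Δf x)^2) * ((16/μs)^d * M^2) := by
              refine mul_le_mul_of_nonneg_left hu4 ?_
              exact Finset.sum_nonneg fun x _ => mul_nonneg (hWnn x) (sq_nonneg _)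
          _ = l2i^2 * ((16/μs)^d * M^2) := by rw [← hl2sq]
      have he : l2i^2 * ((16/μs)^d * M^2) = (l2i * (Real.sqrt ((16/μs)^d) * M))^2 := by
        rw [mul_pow, mul_pow, Real.sq_sqrt (pow_pos hKpos d).le]
      have h1 : ∑ x, Wt w x * (|Δf x| * (u x)^2)
          = Real.sqrt ((∑ x, Wt w x * (|Δf x| * (u x)^2))^2) := (Real.sqrt_sq hAbsNonneg).symm
      rw [h1]
      calc Real.sqrt ((∑ x, Wt w x * (|Δf x| * (u x)^2))^2)
          ≤ Real.sqrt ((l2i * (Real.sqrt ((16/μs)^d) * M))^2) := by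
            rw [← he]
            exact Real.sqrt_le_sqrt hb
        _ = l2i * (Real.sqrt ((16/μs)^d) * M) := Real.sqrt_sq
            (mul_nonneg hl2nn (mul_nonneg (Real.sqrt_nonneg _) hM0))
    have hstep1 : M^2 ≤ l1i * (∑ x, Wt w x * (|Δf x| * (u x)^2)) := by
      have hM1 : M ≤ ∑ x, Wt w x * (Real.sqrt (|Δf x|) * (Real.sqrt (|Δf x|) * |u x|)) := habs
      have hM1nn : 0 ≤ ∑ x, Wt w x * (Real.sqrt (|Δf x|) * (Real.sqrt (|Δf x|) * |u x|)) :=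
        le_trans hM0 hM1
      calc M^2 ≤ (∑ x, Wt w x * (Real.sqrt (|Δf x|) * (Real.sqrt (|Δf x|) * |u x|)))^2 := by
            nlinarith [hM1, hM0]
        _ ≤ (∑ x, Wt w x * |Δf x|) * (∑ x, Wt w x * (|Δf x| * (u x)^2)) := hcs1
        _ = l1i * (∑ x, Wt w x * (|Δf x| * (u x)^2)) := by rw [← hl1]
    have hfinal : M ≤ Real.sqrt ((16/μs)^d) * l1i * l2i := by
      rcases eq_or_lt_of_le hM0 with heq | hMpos
      · rw [← heq]
        positivity
      · have hcomb : M^2 ≤ l1i * (l2i * (Real.sqrt ((16/μs)^d) * M)) :=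
          le_trans hstep1 (mul_le_mul_of_nonneg_left hstep2 hl1pos.le)
        have hMM : M * M ≤ (Real.sqrt ((16/μs)^d) * l1i * l2i) * M := by nlinarith [hcomb]
        exact le_of_mul_le_mul_right hMM hMpos
    exact hfinal
  -- subset bound
  have hMτ : ∀ d : ℕ,
      (∑ S ∈ univ.filter (fun S : Finset (Fin n) => i ∈ S ∧ S.card ≤ d),
        inn w (esp w S f) (esp w S f)) ≤ l2i^2 := by
    intro d
    rw [← hτ]
    refine Finset.sum_le_sum_of_subset_of_nonneg ?_ (fun S _ _ => hν0 S)
    intro S hS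
    rw [Finset.mem_filter] at hS ⊢
    exact ⟨hS.1, hS.2.1⟩
  -- logs
  set t : ℝ := Real.log (l2i / l1i) with htdef
  have htpos : 0 < t := Real.log_pos ((one_lt_div hl1pos).mpr hl12)
  set L : ℝ := Real.log (16/μs) with hLdef
  have hLpos : 0 < L := Real.log_pos (by rw [lt_div_iff₀ hμpos]; linarith)
  have hlogpos : 0 < Real.log (1/μs) := Real.log_pos (by rw [lt_div_iff₀ hμpos]; linarith)
  have hlog2 : Real.log 2 ≤ Real.log (1/μs) := by
    refine Real.log_le_log (by norm_num) ?_
    rw [le_div_iff₀ hμpos]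
    linarith
  have hlog2pos : (0.6931471803 : ℝ) < Real.log 2 := Real.log_two_gt_d9
  have hL5 : L ≤ 5 * Real.log (1/μs) := by
    rw [hLdef, show (16:ℝ)/μs = 16 * (1/μs) by ring,
      Real.log_mul (by norm_num) (by positivity),
      show (16:ℝ) = 2^4 by norm_num, Real.log_pow]
    push_cast
    linarith
  have hl1e : l1i = Real.exp (-t) * l2i := by
    rw [htdef, Real.exp_neg, Real.exp_log (by positivity)]
    field_simp
  by_cases hcase : t < L
  · -- small t : take d = 1
    refine ⟨1, le_refl 1, ?_⟩
    have h1 : (∑ S ∈ univ.filter (fun S : Finset (Fin n) => i ∈ S ∧ S.card ≤ 1),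
        inn w (esp w S f) (esp w S f)) ≤ l2i^2 := hMτ 1
    rw [hτ]
    have hgoal : (3/2) * l2i^2 ≤ 8 * Real.log (1/μs) * (l2i^2 / t) := by
      rw [mul_div_assoc', le_div_iff₀ htpos]
      have ht5 : t ≤ 5 * Real.log (1/μs) := le_trans hcase.le hL5
      nlinarith [sq_nonneg l2i, hlogpos]
    push_cast
    linarith
  · -- large t : take d = ⌊t/L⌋₊
    push_neg at hcase
    set d : ℕ := Nat.floor (t/L) with hddef
    have hd1 : 1 ≤ d := by
      rw [hddef]
      refine Nat.le_floor ?_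
      rw [Nat.cast_one, le_div_iff₀ hLpos]
      linarith
    have hdle : (d:ℝ) ≤ t/L := Nat.floor_le (by positivity)
    have hdlt : t/L < d + 1 := Nat.lt_floor_add_one _
    refine ⟨d, hd1, ?_⟩
    rw [hτ]
    have hKexp : (16/μs)^d = Real.exp (d * L) := by
      rw [hLdef, Real.exp_nat_mul, Real.exp_log hKpos]
    have hdLt : (d:ℝ)*L ≤ t := (le_div_iff₀ hLpos).mp hdle
    have hM2 : (∑ S ∈ univ.filter (fun S : Finset (Fin n) => i ∈ S ∧ S.card ≤ d),
        inn w (esp w S f) (esp w S f)) ≤ Real.exp (-(t/2)) * l2i^2 := by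
      refine le_trans (hMle d) ?_
      rw [hKexp, sqrt_exp_half, hl1e]
      have hexple : Real.exp ((d:ℝ)*L/2) * (Real.exp (-t) * l2i) * l2i
          = Real.exp ((d:ℝ)*L/2 - t) * l2i^2 := by
        rw [show ((d:ℝ)*L/2 - t) = (d:ℝ)*L/2 + (-t) by ring, Real.exp_add]
        ring
      rw [hexple]
      refine mul_le_mul_of_nonneg_right ?_ (sq_nonneg _)
      refine Real.exp_le_exp.mpr ?_
      linarith
    have hexp2 : Real.exp (-(t/2)) ≤ 2/t := by
      have h1 : t/2 ≤ Real.exp (t/2) := by linarith [Real.add_one_le_exp (t/2)]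
      rw [Real.exp_neg]
      have h3 : (Real.exp (t/2))⁻¹ ≤ (t/2)⁻¹ := by
        apply inv_anti₀ (by positivity) h1
      calc (Real.exp (t/2))⁻¹ ≤ (t/2)⁻¹ := h3
        _ = 2/t := by rw [inv_div]
    have hτd : l2i^2/((d:ℝ)+1) ≤ (L/t) * l2i^2 := by
      have h1 : t ≤ ((d:ℝ)+1)*L := by
        have h0 := hdlt
        rw [div_lt_iff₀ hLpos] at h0
        linarith
      have h2 : (1:ℝ)/((d:ℝ)+1) ≤ L/t := by
        rw [div_le_div_iff₀ (by positivity) htpos]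
        linarith
      calc l2i^2/((d:ℝ)+1) = l2i^2 * (1/((d:ℝ)+1)) := by ring
        _ ≤ l2i^2 * (L/t) := mul_le_mul_of_nonneg_left h2 (sq_nonneg _)
        _ = (L/t) * l2i^2 := by ring
    have hfin : Real.exp (-(t/2)) * l2i^2 + (L/t)*l2i^2
        ≤ 8 * Real.log (1/μs) * (l2i^2 / t) := by
      have hexp2' : Real.exp (-(t/2)) * l2i^2 ≤ (2/t) * l2i^2 :=
        mul_le_mul_of_nonneg_right hexp2 (sq_nonneg _)
      have hLt' : (L/t)*l2i^2 ≤ (5*Real.log (1/μs)/t) * l2i^2 := by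
        refine mul_le_mul_of_nonneg_right ?_ (sq_nonneg _)
        exact (div_le_div_iff_of_pos_right htpos).mpr hL5
      have h2le : (2:ℝ) ≤ 3 * Real.log (1/μs) := by nlinarith [hlog2, hlog2pos]
      have hcomb : (2/t) * l2i^2 + (5*Real.log (1/μs)/t) * l2i^2
          ≤ 8 * Real.log (1/μs) * (l2i^2 / t) := by
        rw [show 8 * Real.log (1/μs) * (l2i^2 / t) = (8*Real.log (1/μs)/t) * l2i^2 by ring]
        rw [show (2/t) * l2i^2 + (5*Real.log (1/μs)/t) * l2i^2
          = ((2 + 5*Real.log (1/μs))/t) * l2i^2 by ring]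
        refine mul_le_mul_of_nonneg_right ?_ (sq_nonneg _)
        refine (div_le_div_iff_of_pos_right htpos).mpr ?_
        linarith
      linarith
    calc (∑ S ∈ univ.filter (fun S : Finset (Fin n) => i ∈ S ∧ S.card ≤ d),
          inn w (esp w S f) (esp w S f)) + l2i^2/((d:ℝ)+1)
        ≤ Real.exp (-(t/2)) * l2i^2 + (L/t)*l2i^2 := add_le_add hM2 hτd
      _ ≤ 8 * Real.log (1/μs) * (l2i^2 / t) := hfin
end Tala

open Tala in
set_option maxHeartbeats 1000000 in
/-- Generalization of Talagrand's theorem. There is a universal constant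
`C > 0` such that for any finite probability space `(Ω, μ)` with minimal atom probability
`μ*` and any `f : Ω^n → ℝ`, writing `Δ_i f = f - E[f | X_j, j ≠ i]`
(which equals `Σ_{S ∋ i} f_S` for the Efron-Stein decomposition), if each `Δ_i f` is
nonzero with `‖Δ_i f‖₂ > ‖Δ_i f‖₁` then
`Var(f) ≤ C·log(1/μ*)·Σ_i ‖Δ_i f‖₂² / log(‖Δ_i f‖₂/‖Δ_i f‖₁)`. -/
theorem talagrand_generalization :
    ∃ C : ℝ, 0 < C ∧
      ∀ (n : ℕ) (Ω : Type) [Fintype Ω] [Nonempty Ω] (w : Ω → ℝ),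
        (∀ a, 0 < w a) → (∑ a, w a = 1) →
        ∀ f : (Fin n → Ω) → ℝ,
          let μstar := Finset.univ.inf' Finset.univ_nonempty w
          let W : (Fin n → Ω) → ℝ := fun x => ∏ i, w (x i)
          let Δ : Fin n → (Fin n → Ω) → ℝ := fun i x => f x - condExp w ({i}ᶜ) f x
          ∀ l1 l2 : Fin n → ℝ,
            (∀ i, l1 i = ∑ x, W x * |Δ i x|) →
            (∀ i, l2 i = (∑ x, W x * (Δ i x) ^ 2) ^ (1 / 2 : ℝ)) →
            (∀ i, 0 < l1 i) → (∀ i, l1 i < l2 i) →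
            (∑ x, W x * (f x) ^ 2) - (∑ x, W x * f x) ^ 2 ≤
              C * Real.log (1 / μstar) *
                ∑ i, (l2 i) ^ 2 / Real.log (l2 i / l1 i) := by
  classical
  refine ⟨8, by norm_num, ?_⟩
  intro n Ω _inst _inst2 w hw hw1 f μstar W Δ l1 l2 hl1 hl2 hl1pos hl12
  have hWW : W = Tala.Wt w := rfl
  have hμpos : 0 < μstar := by
    have : ∀ a ∈ Finset.univ, 0 < w a := fun a _ => hw a
    exact (Finset.lt_inf'_iff _).mpr this
  have hμle : ∀ a, μstar ≤ w a := fun a => Finset.inf'_le w (Finset.mem_univ a)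
  have hΔd : ∀ i x, Δ i x = f x - condExp w (({i} : Finset (Fin n))ᶜ) f x := fun i x => rfl
  have hW0 : ∀ x, 0 ≤ W x := by
    rw [hWW]
    exact Tala.Wt_nonneg hw
  have hl2sq : ∀ i, (l2 i)^2 = ∑ x, W x * (Δ i x)^2 := by
    intro i
    rw [hl2 i]
    have hb : 0 ≤ ∑ x, W x * (Δ i x)^2 :=
      Finset.sum_nonneg fun x _ => mul_nonneg (hW0 x) (sq_nonneg _)
    rw [← Real.rpow_natCast ((∑ x, W x * Δ i x ^ 2) ^ (1/2:ℝ)) 2, ← Real.rpow_mul hb]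
    norm_num
  have hl2pos : ∀ i, 0 < l2 i := fun i => lt_trans (hl1pos i) (hl12 i)
  rcases Nat.eq_zero_or_pos n with hn0 | hn
  · subst hn0
    have hWone : W (default : Fin 0 → Ω) = 1 := by
      rw [hWW]
      unfold Tala.Wt
      simp
    have hs2 : (∑ x, W x * (f x)^2) = (f default)^2 := by
      rw [Fintype.sum_unique, hWone, one_mul]
    have hs1 : (∑ x, W x * f x) = f default := by
      rw [Fintype.sum_unique, hWone, one_mul]
    rw [hs2, hs1]
    have hrhs : ∑ i : Fin 0, (l2 i)^2 / Real.log (l2 i / l1 i) = 0 := by simp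
    rw [hrhs, mul_zero, sub_self]
  -- n ≥ 1 : μstar ≤ 1/2
  have hμhalf : μstar ≤ 1/2 := by
    by_contra hgt
    push_neg at hgt
    have hsub : ∀ a b : Ω, a = b := by
      by_contra hne
      push_neg at hne
      obtain ⟨a, b, hab⟩ := hne
      have h2 : ∑ c ∈ ({a, b} : Finset Ω), w c ≤ ∑ c, w c :=
        Finset.sum_le_sum_of_subset_of_nonneg (Finset.subset_univ _)
          (fun c _ _ => (hw c).le)
      rw [Finset.sum_pair hab, hw1] at h2
      have ha := hμle a
      have hb := hμle b
      linarith
    set i0 : Fin n := ⟨0, hn⟩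
    have hΔ0 : ∀ x, Δ i0 x = 0 := by
      intro x
      rw [hΔd]
      have hcx : condExp w (({i0} : Finset (Fin n))ᶜ) f x = f x := by
        rw [Tala.condExp_eq]
        have hmr : ∀ y : Fin n → Ω, Tala.mrg (({i0} : Finset (Fin n))ᶜ) x y = x := by
          intro y
          funext j
          by_cases hj : j ∈ (({i0} : Finset (Fin n))ᶜ)
          · simp [Tala.mrg, hj]
          · simp only [Tala.mrg, if_neg hj]
            exact hsub (y j) (x j)
        simp only [hmr]
        rw [← Finset.sum_mul, Tala.sum_Wt hw1, one_mul]
      rw [hcx, sub_self]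
    have hzero : l1 i0 = 0 := by
      rw [hl1 i0]
      refine Finset.sum_eq_zero fun x _ => ?_
      rw [hΔ0 x]
      simp
    exact absurd hzero (ne_of_gt (hl1pos i0))
  -- choose d i via per_i
  have hper : ∀ i : Fin n, ∃ d : ℕ, 1 ≤ d ∧
      (∑ S ∈ univ.filter (fun S : Finset (Fin n) => i ∈ S ∧ S.card ≤ d),
          Tala.inn w (Tala.esp w S f) (Tala.esp w S f))
        + (∑ S ∈ univ.filter (fun S : Finset (Fin n) => i ∈ S),
            Tala.inn w (Tala.esp w S f) (Tala.esp w S f)) / (d + 1)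
      ≤ 8 * Real.log (1/μstar) * ((l2 i)^2 / Real.log (l2 i / l1 i)) := by
    intro i
    refine Tala.per_i hw hw1 μstar hμpos hμle hμhalf f i (l1 i) (l2 i) ?_ ?_
      (hl2pos i).le (hl1pos i) (hl12 i)
    · rw [hl1 i, hWW]
    · rw [hl2sq i, hWW]
  choose dd hdd1 hddle using hper
  set ν : Finset (Fin n) → ℝ :=
    fun S => Tala.inn w (Tala.esp w S f) (Tala.esp w S f) with hνdef
  have hν0 : ∀ S, 0 ≤ ν S := fun S => Tala.inn_self_nonneg hw _
  -- variance decomposition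
  have hPar : ∑ x, W x * (f x)^2 = ∑ S : Finset (Fin n), ν S := by
    rw [hWW]
    have h1 : ∑ x, Tala.Wt w x * (f x)^2 = Tala.inn w f f := by
      unfold Tala.inn
      exact Finset.sum_congr rfl fun x _ => by ring
    rw [h1]
    have h2 := Tala.inn_sumesp hw hw1 univ univ (subset_refl _) f
    have hfd : (fun x => ∑ S ∈ (univ : Finset (Finset (Fin n))), Tala.esp w S f x) = f := by
      funext x
      exact Tala.esp_decomp hw1 f x
    rw [hfd] at h2
    exact h2
  have hν_empty : ν ∅ = (∑ x, W x * f x)^2 := by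
    rw [hνdef, hWW]
    simp only []
    rw [Tala.esp_empty_const hw1]
    unfold Tala.inn
    have hpt : ∀ x : Fin n → Ω,
        Tala.Wt w x * ((∑ y, Tala.Wt w y * f y) * (∑ y, Tala.Wt w y * f y))
          = Tala.Wt w x * (∑ y, Tala.Wt w y * f y)^2 := fun x => by ring
    rw [Finset.sum_congr rfl fun x _ => hpt x, ← Finset.sum_mul, Tala.sum_Wt hw1, one_mul]
  have hVar : (∑ x, W x * (f x)^2) - (∑ x, W x * f x)^2
      = ∑ S ∈ (univ : Finset (Finset (Fin n))).erase ∅, ν S := by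
    rw [hPar, ← hν_empty]
    have h3 := Finset.sum_erase_add (univ : Finset (Finset (Fin n))) ν (Finset.mem_univ ∅)
    linarith
  rw [hVar]
  -- combinatorial step
  have hcomb : ∑ S ∈ (univ : Finset (Finset (Fin n))).erase ∅, ν S
      ≤ ∑ i, ((∑ S ∈ univ.filter (fun S : Finset (Fin n) => i ∈ S ∧ S.card ≤ dd i), ν S)
          + (∑ S ∈ univ.filter (fun S : Finset (Fin n) => i ∈ S), ν S) / (dd i + 1)) := by
    have hperS : ∀ S ∈ (univ : Finset (Finset (Fin n))).erase ∅,
        ν S ≤ ∑ i ∈ S, ((if S.card ≤ dd i then ν S else 0) + ν S / (dd i + 1)) := by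
      intro S hS
      have hSne : S ≠ ∅ := (Finset.mem_erase.mp hS).1
      have hScard : 0 < S.card := Finset.card_pos.mpr (Finset.nonempty_of_ne_empty hSne)
      have hFnn : ∀ i : Fin n, 0 ≤ (if S.card ≤ dd i then ν S else 0) + ν S / (dd i + 1) := by
        intro i
        have h1 : 0 ≤ (if S.card ≤ dd i then ν S else 0) := by
          split_ifs
          exacts [hν0 S, le_refl 0]
        have h2 : 0 ≤ ν S / ((dd i : ℝ) + 1) := div_nonneg (hν0 S) (by positivity)
        linarith
      by_cases hex : ∃ i ∈ S, S.card ≤ dd i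
      · obtain ⟨i0, hi0S, hi0⟩ := hex
        have hterm : ν S ≤ (if S.card ≤ dd i0 then ν S else 0) + ν S / (dd i0 + 1) := by
          rw [if_pos hi0]
          have h2 : 0 ≤ ν S / ((dd i0 : ℝ) + 1) := div_nonneg (hν0 S) (by positivity)
          linarith
        exact le_trans hterm (Finset.single_le_sum (fun i _ => hFnn i) hi0S)
      · push_neg at hex
        have h1 : ∀ i ∈ S, ν S / S.card ≤ ν S / (dd i + 1) := by
          intro i hi
          have hlt : dd i < S.card := hex i hi
          refine div_le_div_of_nonneg_left (hν0 S) (by positivity) ?_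
          have : (dd i : ℝ) + 1 ≤ S.card := by exact_mod_cast hlt
          exact this
        have h2 : ν S = ∑ _i ∈ S, ν S / S.card := by
          rw [Finset.sum_const, nsmul_eq_mul]
          field_simp
        calc ν S = ∑ _i ∈ S, ν S / S.card := h2
          _ ≤ ∑ i ∈ S, ν S / (dd i + 1) := Finset.sum_le_sum h1
          _ ≤ ∑ i ∈ S, ((if S.card ≤ dd i then ν S else 0) + ν S / (dd i + 1)) := by
              refine Finset.sum_le_sum fun i _ => ?_
              have h3 : 0 ≤ (if S.card ≤ dd i then ν S else 0) := by
                split_ifs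
                exacts [hν0 S, le_refl 0]
              linarith
    calc ∑ S ∈ (univ : Finset (Finset (Fin n))).erase ∅, ν S
        ≤ ∑ S ∈ (univ : Finset (Finset (Fin n))).erase ∅,
            ∑ i ∈ S, ((if S.card ≤ dd i then ν S else 0) + ν S / (dd i + 1)) :=
          Finset.sum_le_sum hperS
      _ = ∑ S ∈ (univ : Finset (Finset (Fin n))).erase ∅, ∑ i : Fin n,
            (if i ∈ S then ((if S.card ≤ dd i then ν S else 0) + ν S / (dd i + 1)) else 0) := by
          refine Finset.sum_congr rfl fun S _ => ?_
          rw [Finset.sum_ite_mem, Finset.univ_inter]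
      _ = ∑ i : Fin n, ∑ S ∈ (univ : Finset (Finset (Fin n))).erase ∅,
            (if i ∈ S then ((if S.card ≤ dd i then ν S else 0) + ν S / (dd i + 1)) else 0) :=
          Finset.sum_comm
      _ ≤ ∑ i, ((∑ S ∈ univ.filter (fun S : Finset (Fin n) => i ∈ S ∧ S.card ≤ dd i), ν S)
          + (∑ S ∈ univ.filter (fun S : Finset (Fin n) => i ∈ S), ν S) / (dd i + 1)) := by
          refine Finset.sum_le_sum fun i _ => ?_
          rw [← Finset.sum_filter]
          have hEfil : ((univ : Finset (Finset (Fin n))).erase ∅).filter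
              (fun S => i ∈ S) = univ.filter (fun S : Finset (Fin n) => i ∈ S) := by
            ext S
            simp only [Finset.mem_filter, Finset.mem_erase, Finset.mem_univ, true_and, and_true]
            constructor
            · rintro ⟨-, h⟩
              exact h
            · intro h
              exact ⟨Finset.ne_empty_of_mem h, h⟩
          rw [hEfil, Finset.sum_add_distrib]
          have hfirst : ∑ S ∈ univ.filter (fun S : Finset (Fin n) => i ∈ S),
              (if S.card ≤ dd i then ν S else 0)
              = ∑ S ∈ univ.filter (fun S : Finset (Fin n) => i ∈ S ∧ S.card ≤ dd i), ν S := by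
            rw [Finset.sum_filter, Finset.sum_filter]
            refine Finset.sum_congr rfl fun S _ => ?_
            by_cases h1 : i ∈ S <;> by_cases h2 : S.card ≤ dd i <;> simp [h1, h2]
          rw [hfirst, ← Finset.sum_div]
  refine le_trans hcomb ?_
  have hmulsum : 8 * Real.log (1/μstar) * ∑ i, (l2 i)^2 / Real.log (l2 i / l1 i)
      = ∑ i, 8 * Real.log (1/μstar) * ((l2 i)^2 / Real.log (l2 i / l1 i)) := by
    rw [Finset.mul_sum]
  rw [hmulsum]
  exact Finset.sum_le_sum fun i _ => hddle i
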